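/- Any regular hull H of a degenerate subspace W with radical I is isometric to the orthogonal direct sum (I ⊕ I*) ⊕ G, where G is a maximal nondegenerate subspace of W and I ⊕ I* carries its canonical neutral hyperbolic pairing; in particular, the hull of a φ-invariant degenerate subspace has neutral signature (k+l, k+l) where k = dim I and G has signature (l, l). -/

import Mathlib

open Module


-- helper 1: orthogonal projection onto a nondegenerate subspace
lemma aux_proj {V : Type*} [AddCommGroup V] [Module ℝ V] [FiniteDimensional ℝ V]
    (g : V →ₗ[ℝ] V →ₗ[ℝ] ℝ) (hsymm : ∀ x y, g x y = g y x)
    (G : Submodule ℝ V) (hGreg : ∀ x ∈ G, (∀ y ∈ G, g x y = 0) → x = 0) (v : V) :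
    ∃ p ∈ G, ∀ y ∈ G, g (v - p) y = 0 := by
  set T : G →ₗ[ℝ] Module.Dual ℝ G := g.domRestrict₁₂ G G with hT
  have hinj : Function.Injective T := by
    rw [injective_iff_map_eq_zero]
    intro a ha
    refine Subtype.ext (hGreg a a.2 fun y hy => ?_)
    have := LinearMap.congr_fun ha ⟨y, hy⟩
    simpa [hT, LinearMap.domRestrict₁₂_apply] using this
  have hsurj : Function.Surjective T :=
    (LinearMap.injective_iff_surjective_of_finrank_eq_finrank
      (by rw [Subspace.dual_finrank_eq])).mp hinj
  obtain ⟨p, hp⟩ := hsurj ((g v).domRestrict G)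
  refine ⟨p, p.2, fun y hy => ?_⟩
  have := LinearMap.congr_fun hp ⟨y, hy⟩
  simp only [hT, LinearMap.domRestrict₁₂_apply, LinearMap.domRestrict_apply] at this
  simp [map_sub, LinearMap.sub_apply, this]

-- helper 2: surjectivity onto the dual of a subspace of a nondegenerate space
lemma aux_dualsurj {V : Type*} [AddCommGroup V] [Module ℝ V] [FiniteDimensional ℝ V]
    (g : V →ₗ[ℝ] V →ₗ[ℝ] ℝ) (hsymm : ∀ x y, g x y = g y x)
    (H I : Submodule ℝ V) (hIH : I ≤ H)
    (hHreg : ∀ x ∈ H, (∀ y ∈ H, g x y = 0) → x = 0)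
    (ξ : Module.Dual ℝ I) : ∃ f ∈ H, ∀ w : I, g f w = ξ w := by
  set Φ : H →ₗ[ℝ] Module.Dual ℝ I := g.domRestrict₁₂ H I with hΦ
  have hinj : Function.Injective Φ.dualMap := by
    rw [injective_iff_map_eq_zero]
    intro η hη
    obtain ⟨v, rfl⟩ := (Module.evalEquiv ℝ I).surjective η
    have hv : (v : V) = 0 := by
      refine hHreg v (hIH v.2) fun y hy => ?_
      have := LinearMap.congr_fun hη ⟨y, hy⟩
      simp only [LinearMap.dualMap_apply, Module.evalEquiv_apply, Module.Dual.eval_apply,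
        LinearMap.zero_apply, hΦ, LinearMap.domRestrict₁₂_apply] at this
      rw [hsymm]; exact this
    have : v = 0 := Subtype.ext hv
    simp [this]
  have hsurj : Function.Surjective Φ := LinearMap.dualMap_injective_iff.mp hinj
  obtain ⟨fh, hfh⟩ := hsurj ξ
  exact ⟨fh, fh.2, fun w => by have := LinearMap.congr_fun hfh w; simpa [hΦ, LinearMap.domRestrict₁₂_apply] using this⟩

lemma aux_decomp {V : Type*} [AddCommGroup V] [Module ℝ V] [FiniteDimensional ℝ V]
    (g : V →ₗ[ℝ] V →ₗ[ℝ] ℝ) (hsymm : ∀ x y, g x y = g y x)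
    (W I G : Submodule ℝ V)
    (hIdef : ∀ v : V, v ∈ I ↔ v ∈ W ∧ ∀ w ∈ W, g v w = 0)
    (hGW : G ≤ W)
    (hGreg : ∀ x ∈ G, (∀ y ∈ G, g x y = 0) → x = 0)
    (hGmax : ∀ G' : Submodule ℝ V, G ≤ G' → G' ≤ W →
      (∀ x ∈ G', (∀ y ∈ G', g x y = 0) → x = 0) → G' = G) :
    W = I ⊔ G := by
  have hIW : I ≤ W := fun v hv => ((hIdef v).mp hv).1
  have hIrad : ∀ v ∈ I, ∀ w ∈ W, g v w = 0 := fun v hv => ((hIdef v).mp hv).2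
  have hradI : ∀ v, v ∈ W → (∀ w ∈ W, g v w = 0) → v ∈ I := fun v h1 h2 => (hIdef v).mpr ⟨h1, h2⟩
  -- all squares of G-orthogonal vectors of W vanish
  have hsq : ∀ u, u ∈ W → (∀ y ∈ G, g u y = 0) → g u u = 0 := by
    intro u huW huG
    by_contra hne
    have hG' : (G ⊔ Submodule.span ℝ {u}) = G := by
      apply hGmax
      · exact le_sup_left
      · exact sup_le hGW (Submodule.span_le.mpr (by simpa using huW))
      · intro x hx hxperp
        obtain ⟨y, hy, s, hs, rfl⟩ := Submodule.mem_sup.mp hx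
        obtain ⟨t, rfl⟩ := Submodule.mem_span_singleton.mp hs
        have hu_mem : u ∈ G ⊔ Submodule.span ℝ {u} :=
          Submodule.mem_sup_right (Submodule.mem_span_singleton_self u)
        have h1 : g (y + t • u) u = 0 := hxperp u hu_mem
        have h2 : g y u = 0 := by rw [hsymm]; exact huG y hy
        have ht : t = 0 := by
          have : t * g u u = 0 := by
            simpa [map_add, map_smul, LinearMap.add_apply, LinearMap.smul_apply, h2] using h1
          rcases mul_eq_zero.mp this with h | h
          · exact h
          · exact absurd h hne
        subst ht
        simp only [zero_smul, add_zero]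
        refine hGreg y hy fun y' hy' => ?_
        simpa using hxperp y' (Submodule.mem_sup_left hy')
    have huG' : u ∈ G := hG' ▸ Submodule.mem_sup_right (Submodule.mem_span_singleton_self u)
    exact hne (huG u huG')
  -- G-orthogonal vectors of W lie in the radical
  have hCI : ∀ u, u ∈ W → (∀ y ∈ G, g u y = 0) → u ∈ I := by
    intro u huW huG
    refine hradI u huW fun w hwW => ?_
    obtain ⟨p, hpG, hp⟩ := aux_proj g hsymm G hGreg w
    have h1 : w - p ∈ W := sub_mem hwW (hGW hpG)
    have e1 : g u u = 0 := hsq u huW huG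
    have e2 : g (w - p) (w - p) = 0 := hsq _ h1 hp
    have e3 : g (u + (w - p)) (u + (w - p)) = 0 := by
      refine hsq _ (add_mem huW h1) fun y hy => ?_
      simp only [map_add, LinearMap.add_apply]
      rw [huG y hy, hp y hy, add_zero]
    have e4 : g u (w - p) = 0 := by
      have hsym' : g (w - p) u = g u (w - p) := hsymm _ _
      simp only [map_add, LinearMap.add_apply, e1, e2, hsym'] at e3
      linarith
    have : g u w = g u (w - p) + g u p := by
      rw [← LinearMap.map_add]
      congr 1
      abel
    rw [this, e4, huG p hpG, add_zero]
  apply le_antisymm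
  · intro w hw
    obtain ⟨p, hpG, hp⟩ := aux_proj g hsymm G hGreg w
    have : w - p ∈ I := hCI _ (sub_mem hw (hGW hpG)) hp
    exact Submodule.mem_sup.mpr ⟨w - p, this, p, hpG, by abel⟩
  · exact sup_le hIW hGW

lemma aux_main1 {V : Type*} [AddCommGroup V] [Module ℝ V] [FiniteDimensional ℝ V]
    (g : V →ₗ[ℝ] V →ₗ[ℝ] ℝ) (hsymm : ∀ x y, g x y = g y x)
    (W H I G : Submodule ℝ V)
    (hIdef : ∀ v : V, v ∈ I ↔ v ∈ W ∧ ∀ w ∈ W, g v w = 0)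
    (hWH : W ≤ H)
    (hHreg : ∀ x ∈ H, (∀ y ∈ H, g x y = 0) → x = 0)
    (hHmin : ∀ H' : Submodule ℝ V, W ≤ H' → H' ≤ H →
      (∀ x ∈ H', (∀ y ∈ H', g x y = 0) → x = 0) → H' = H)
    (hGW : G ≤ W)
    (hGreg : ∀ x ∈ G, (∀ y ∈ G, g x y = 0) → x = 0)
    (hWIG : W = I ⊔ G) :
    (∃ e : H ≃ₗ[ℝ] (I × Module.Dual ℝ I) × G,
      ∀ x y : H, g (x : V) (y : V) =
        (e x).1.2 (e y).1.1 + (e y).1.2 (e x).1.1 + g ((e x).2 : V) ((e y).2 : V)) ∧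
      Module.finrank ℝ H = 2 * Module.finrank ℝ I + Module.finrank ℝ G := by
  classical
  have hIW : I ≤ W := fun v hv => ((hIdef v).mp hv).1
  have hIrad : ∀ v ∈ I, ∀ w ∈ W, g v w = 0 := fun v hv => ((hIdef v).mp hv).2
  have hIG : ∀ v, v ∈ I → v ∈ G → v = 0 := fun v hvI hvG =>
    hGreg v hvG fun y hy => hIrad v hvI y (hGW hy)
  have hIH : I ≤ H := hIW.trans hWH
  set k := Module.finrank ℝ I with hk
  let b : Basis (Fin k) ℝ I := Module.finBasis ℝ I
  -- choose dual vectors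
  have hF0 : ∀ m : Fin k, ∃ f ∈ H, ∀ w : I, g f w = b.coord m w := fun m =>
    aux_dualsurj g hsymm H I hIH hHreg (b.coord m)
  choose f0 hf0H hf0 using hF0
  -- make them orthogonal to G
  have hPr : ∀ m : Fin k, ∃ p ∈ G, ∀ y ∈ G, g (f0 m - p) y = 0 := fun m =>
    aux_proj g hsymm G hGreg (f0 m)
  choose pr hprG hpr using hPr
  set f1 : Fin k → V := fun m => f0 m - pr m with hf1def
  have hf1H : ∀ m, f1 m ∈ H := fun m => sub_mem (hf0H m) (hWH (hGW (hprG m)))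
  have hf1I : ∀ m, ∀ w : I, g (f1 m) (w : V) = b.coord m w := by
    intro m w
    have h1 : g (pr m) (w : V) = 0 := by
      rw [hsymm]; exact hIrad (w : V) w.2 (pr m) (hGW (hprG m))
    simp only [hf1def, map_sub, LinearMap.sub_apply, h1, sub_zero, hf0]
  have hf1G : ∀ m, ∀ y ∈ G, g (f1 m) y = 0 := hpr
  -- make them isotropic
  set c : Fin k → Fin k → ℝ := fun i j => g (f1 i) (f1 j) with hc
  set s : Fin k → V := fun m => (2⁻¹ : ℝ) • ∑ n, c m n • ((b n : I) : V) with hsdef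
  have hsI : ∀ m, s m ∈ I := fun m =>
    Submodule.smul_mem _ _ (Submodule.sum_mem _ fun n _ => Submodule.smul_mem _ _ (b n).2)
  set f : Fin k → V := fun m => f1 m - s m with hfdef
  have hfH : ∀ m, f m ∈ H := fun m => sub_mem (hf1H m) (hIH (hsI m))
  have hfI : ∀ m, ∀ w : I, g (f m) (w : V) = b.coord m w := by
    intro m w
    have h0 : g (s m) (w : V) = 0 := hIrad _ (hsI m) _ (hIW w.2)
    have h0' : g (f1 m) (s m) = g (f1 m) (s m) := rfl
    have : g (f m) (w : V) = g (f1 m) (w : V) - g (s m) (w : V) := by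
      simp [hfdef, map_sub, LinearMap.sub_apply, hsymm (f1 m - s m) (w : V),
        hsymm (f1 m) (w : V), hsymm (s m) (w : V)]
    rw [this, h0, sub_zero, hf1I]
  have hfG : ∀ m, ∀ y ∈ G, g (f m) y = 0 := by
    intro m y hy
    have h0 : g (s m) y = 0 := hIrad _ (hsI m) _ (hGW hy)
    have : g (f m) y = g (f1 m) y - g (s m) y := by
      simp [hfdef, map_sub, LinearMap.sub_apply]
    rw [this, h0, sub_zero, hf1G m y hy]
  have hf1b : ∀ i n, g (f1 i) ((b n : I) : V) = if n = i then 1 else 0 := by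
    intro i n
    rw [hf1I i (b n)]
    simp [Basis.coord_apply, Basis.repr_self, Finsupp.single_apply]
  have hgf1s : ∀ i j, g (f1 i) (s j) = 2⁻¹ * c j i := by
    intro i j
    simp only [hsdef, map_smul, map_sum, smul_eq_mul]
    rw [Finset.sum_congr rfl fun n (_ : n ∈ Finset.univ) => by
      rw [hf1b i n, mul_ite, mul_one, mul_zero]]
    rw [Finset.sum_ite_eq' Finset.univ i (c j), if_pos (Finset.mem_univ i)]
  have hff : ∀ i j, g (f i) (f j) = 0 := by
    intro i j
    have hcsymm : c j i = c i j := hsymm _ _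
    have h1 : g (s i) (f1 j) = 2⁻¹ * c i j := by rw [hsymm, hgf1s j i]
    have h2 : g (s i) (s j) = 0 := hIrad _ (hsI i) _ (hIW (hsI j))
    have e0 : g (f i) (f j) =
        g (f1 i) (f1 j) - g (s i) (f1 j) - (g (f1 i) (s j) - g (s i) (s j)) := by
      simp [hfdef, map_sub, LinearMap.sub_apply]
    have e1 : g (f1 i) (f1 j) = c i j := rfl
    rw [e0, hgf1s i j, h1, h2, e1, hcsymm]
    ring
  -- the dual insertion map
  set B : Module.Dual ℝ I →ₗ[ℝ] V :=
    ∑ m, LinearMap.smulRight (Module.Dual.eval ℝ I (b m)) (f m) with hBdef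
  have hBapp : ∀ ξ : Module.Dual ℝ I, B ξ = ∑ m, ξ (b m) • f m := by
    intro ξ
    simp [hBdef, LinearMap.sum_apply, LinearMap.smulRight_apply, Module.Dual.eval_apply]
  have hBH : ∀ ξ, B ξ ∈ H := fun ξ => by
    rw [hBapp]; exact Submodule.sum_mem _ fun m _ => Submodule.smul_mem _ _ (hfH m)
  have hgvB : ∀ (v : I) (ξ : Module.Dual ℝ I), g (v : V) (B ξ) = ξ v := by
    intro v ξ
    have hvf : ∀ m, g (v : V) (f m) = b.coord m v := fun m => by
      rw [hsymm]; exact hfI m v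
    rw [hBapp, map_sum]
    rw [Finset.sum_congr rfl fun m (_ : m ∈ Finset.univ) => by
      rw [map_smul, smul_eq_mul, hvf m, Basis.coord_apply, mul_comm]]
    conv_rhs => rw [← b.sum_repr v, map_sum]
    refine Finset.sum_congr rfl fun m _ => ?_
    rw [map_smul, smul_eq_mul]
  have hgBv : ∀ (ξ : Module.Dual ℝ I) (v : I), g (B ξ) (v : V) = ξ v := fun ξ v => by
    rw [hsymm]; exact hgvB v ξ
  have hgBB : ∀ ξ η, g (B ξ) (B η) = 0 := by
    intro ξ η
    rw [hBapp ξ, hBapp η]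
    simp [map_sum, LinearMap.sum_apply, map_smul, LinearMap.smul_apply, hff]
  have hgBG : ∀ ξ, ∀ y ∈ G, g (B ξ) y = 0 := by
    intro ξ y hy
    rw [hBapp, map_sum, LinearMap.sum_apply]
    exact Finset.sum_eq_zero fun m _ => by
      rw [map_smul, LinearMap.smul_apply, hfG m y hy, smul_zero]
  -- the assembling map
  set F : (I × Module.Dual ℝ I) × G →ₗ[ℝ] V :=
    (I.subtype.comp ((LinearMap.fst ℝ I (Module.Dual ℝ I)).comp
      (LinearMap.fst ℝ (I × Module.Dual ℝ I) G)))
    + (B.comp ((LinearMap.snd ℝ I (Module.Dual ℝ I)).comp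
      (LinearMap.fst ℝ (I × Module.Dual ℝ I) G)))
    + (G.subtype.comp (LinearMap.snd ℝ (I × Module.Dual ℝ I) G)) with hFdef
  have hFapp : ∀ z : (I × Module.Dual ℝ I) × G, F z = (z.1.1 : V) + B z.1.2 + (z.2 : V) :=
    fun z => rfl
  have hgFF : ∀ z z' : (I × Module.Dual ℝ I) × G,
      g (F z) (F z') = z.1.2 z'.1.1 + z'.1.2 z.1.1 + g ((z.2 : V)) ((z'.2 : V)) := by
    intro z z'
    obtain ⟨⟨v, ξ⟩, p⟩ := z
    obtain ⟨⟨v', ξ'⟩, p'⟩ := z'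
    rw [hFapp, hFapp]
    simp only [map_add, LinearMap.add_apply]
    rw [hIrad _ v.2 _ (hIW v'.2), hgvB v ξ', hIrad _ v.2 _ (hGW p'.2),
        hgBv ξ v', hgBB, hgBG ξ _ p'.2,
        hsymm (p : V) (v' : V), hIrad _ v'.2 _ (hGW p.2),
        hsymm (p : V) (B ξ'), hgBG ξ' _ p.2]
    ring
  have hgFb : ∀ z (m : Fin k), g (F z) ((b m : I) : V) = z.1.2 (b m) := by
    intro z m
    rw [hFapp]
    simp only [map_add, LinearMap.add_apply]
    rw [hIrad _ z.1.1.2 _ (hIW (b m).2), hgBv, hsymm, hIrad _ (b m).2 _ (hGW z.2.2)]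
    ring
  have hgFG : ∀ z, ∀ y ∈ G, g (F z) y = g ((z.2 : V)) y := by
    intro z y hy
    rw [hFapp]
    simp only [map_add, LinearMap.add_apply]
    rw [hIrad _ z.1.1.2 _ (hGW hy), hgBG _ y hy]
    ring
  have hgFf : ∀ z (m : Fin k), g (F z) (f m) = b.coord m z.1.1 := by
    intro z m
    rw [hFapp]
    simp only [map_add, LinearMap.add_apply]
    have h1 : g ((z.1.1 : I) : V) (f m) = b.coord m z.1.1 := by rw [hsymm]; exact hfI m z.1.1
    have h2 : g (B z.1.2) (f m) = 0 := by
      rw [hBapp, map_sum, LinearMap.sum_apply]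
      exact Finset.sum_eq_zero fun n _ => by
        rw [map_smul, LinearMap.smul_apply, hff n m, smul_zero]
    have h3 : g ((z.2 : G) : V) (f m) = 0 := by rw [hsymm]; exact hfG m _ z.2.2
    rw [h1, h2, h3]
    ring
  have hξzero : ∀ ξ : Module.Dual ℝ I, (∀ m, ξ (b m) = 0) → ξ = 0 := by
    intro ξ h
    exact b.ext fun m => by rw [h m]; simp
  have hFinj : Function.Injective F := by
    rw [injective_iff_map_eq_zero]
    intro z hz
    have hξ : z.1.2 = 0 := hξzero _ fun m => by
      have h := hgFb z m
      rw [hz] at h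
      simpa using h.symm
    have hvp : (0 : V) = (z.1.1 : V) + (z.2 : V) := by
      have h := hFapp z
      rw [hz, hξ] at h
      simpa using h
    have hv : ((z.1.1 : I) : V) = 0 := by
      refine hIG _ z.1.1.2 ?_
      have : ((z.1.1 : I) : V) = -(z.2 : V) := by
        rw [eq_neg_iff_add_eq_zero]
        exact hvp.symm
      rw [this]
      exact neg_mem z.2.2
    have hp : ((z.2 : G) : V) = 0 := by
      rw [hv, zero_add] at hvp
      exact hvp.symm
    obtain ⟨⟨v, ξ⟩, p⟩ := z
    simp only [Prod.mk_eq_zero]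
    exact ⟨⟨Subtype.ext hv, hξ⟩, Subtype.ext hp⟩
  have hBcoord : ∀ m, B (b.coord m) = f m := by
    intro m
    rw [hBapp]
    have hco : ∀ n, b.coord m (b n) = if n = m then (1 : ℝ) else 0 := fun n => by
      simp [Basis.coord_apply, Basis.repr_self, Finsupp.single_apply]
    simp only [hco, ite_smul, one_smul, zero_smul]
    rw [Finset.sum_ite_eq' Finset.univ m f, if_pos (Finset.mem_univ m)]
  set H' := LinearMap.range F with hH'def
  have hWH' : W ≤ H' := by
    intro w hw
    rw [hWIG] at hw
    obtain ⟨v, hv, p, hp, rfl⟩ := Submodule.mem_sup.mp hw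
    exact ⟨((⟨v, hv⟩, 0), ⟨p, hp⟩), by rw [hFapp]; simp⟩
  have hfH' : ∀ m, f m ∈ H' := fun m =>
    ⟨((0, b.coord m), 0), by rw [hFapp]; simp [hBcoord m]⟩
  have hH'H : H' ≤ H := by
    rintro x ⟨z, rfl⟩
    rw [hFapp]
    exact add_mem (add_mem (hIH z.1.1.2) (hBH z.1.2)) (hWH (hGW z.2.2))
  have hH'reg : ∀ x ∈ H', (∀ y ∈ H', g x y = 0) → x = 0 := by
    rintro x ⟨z, rfl⟩ hperp
    suffices hz : z = 0 by rw [hz, map_zero]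
    have hξ : z.1.2 = 0 := hξzero _ fun m => by
      rw [← hgFb z m]
      exact hperp _ (hWH' (hIW (b m).2))
    have hp : ((z.2 : G) : V) = 0 := by
      refine hGreg _ z.2.2 fun y hy => ?_
      rw [← hgFG z y hy]
      exact hperp y (hWH' (hGW hy))
    have hv : ((z.1.1 : I) : V) = 0 := by
      have hcoords : ∀ m, b.coord m z.1.1 = 0 := fun m => by
        rw [← hgFf z m]
        exact hperp _ (hH'def ▸ hfH' m)
      have h0 : z.1.1 = 0 := b.forall_coord_eq_zero_iff.mp hcoords
      rw [h0]; rfl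
    obtain ⟨⟨v, ξ⟩, p⟩ := z
    simp only [Prod.mk_eq_zero]
    exact ⟨⟨Subtype.ext hv, hξ⟩, Subtype.ext hp⟩
  have hH'eq : H' = H := hHmin H' hWH' hH'H hH'reg
  let e1 : ((I × Module.Dual ℝ I) × G) ≃ₗ[ℝ] H :=
    (LinearEquiv.ofInjective F hFinj).trans (LinearEquiv.ofEq H' H hH'eq)
  have he1 : ∀ z, ((e1 z : H) : V) = F z := fun z => rfl
  constructor
  · refine ⟨e1.symm, fun x y => ?_⟩
    have hx : ((x : H) : V) = F (e1.symm x) := by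
      conv_lhs => rw [← e1.apply_symm_apply x]
      rw [he1]
    have hy : ((y : H) : V) = F (e1.symm y) := by
      conv_lhs => rw [← e1.apply_symm_apply y]
      rw [he1]
    rw [hx, hy, hgFF]
  · rw [← LinearEquiv.finrank_eq e1]
    rw [Module.finrank_prod, Module.finrank_prod, Subspace.dual_finrank_eq]
    ring
lemma aux_main2 {V : Type*} [AddCommGroup V] [Module ℝ V] [FiniteDimensional ℝ V]
    (g : V →ₗ[ℝ] V →ₗ[ℝ] ℝ) (hsymm : ∀ x y, g x y = g y x)
    (φ : V →ₗ[ℝ] V) (hinv : ∀ x, φ (φ x) = x)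
    (hcompat : ∀ x y, g (φ x) (φ y) = - g x y)
    (W H I G : Submodule ℝ V)
    (hIdef : ∀ v : V, v ∈ I ↔ v ∈ W ∧ ∀ w ∈ W, g v w = 0)
    (hWH : W ≤ H)
    (hGW : G ≤ W)
    (hGreg : ∀ x ∈ G, (∀ y ∈ G, g x y = 0) → x = 0)
    (hWIG : W = I ⊔ G)
    (hrk : finrank ℝ H = 2 * finrank ℝ I + finrank ℝ G)
    (hφW : ∀ w ∈ W, φ w ∈ W) :
    ∃ l : ℕ, Module.finrank ℝ G = 2 * l ∧
        Module.finrank ℝ H = 2 * (Module.finrank ℝ I + l) ∧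
        ∃ L : Submodule ℝ V, L ≤ H ∧ (∀ x ∈ L, ∀ y ∈ L, g x y = 0) ∧
          Module.finrank ℝ L = Module.finrank ℝ I + l := by
  classical
  have hIW : I ≤ W := fun v hv => ((hIdef v).mp hv).1
  have hIrad : ∀ v ∈ I, ∀ w ∈ W, g v w = 0 := fun v hv => ((hIdef v).mp hv).2
  have hradI : ∀ v, v ∈ W → (∀ w ∈ W, g v w = 0) → v ∈ I := fun v h1 h2 => (hIdef v).mpr ⟨h1, h2⟩
  have hIG : ∀ v, v ∈ I → v ∈ G → v = 0 := fun v hvI hvG =>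
    hGreg v hvG fun y hy => hIrad v hvI y (hGW hy)
  have hφI : ∀ v ∈ I, φ v ∈ I := by
    intro v hv
    refine hradI _ (hφW v (hIW hv)) fun w hw => ?_
    have h1 : g (φ v) (φ (φ w)) = - g v (φ w) := hcompat v (φ w)
    rw [hinv] at h1
    rw [h1, hIrad v hv (φ w) (hφW w hw), neg_zero]
  set P : Submodule ℝ V :=
    { carrier := {x | x ∈ G ∧ φ x - x ∈ I}
      add_mem' := by
        rintro a b ⟨haG, haI⟩ ⟨hbG, hbI⟩
        refine ⟨G.add_mem haG hbG, ?_⟩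
        have h : φ (a + b) - (a + b) = (φ a - a) + (φ b - b) := by rw [map_add]; abel
        rw [h]; exact I.add_mem haI hbI
      zero_mem' := ⟨G.zero_mem, by simp⟩
      smul_mem' := by
        rintro t a ⟨haG, haI⟩
        refine ⟨G.smul_mem t haG, ?_⟩
        have h : φ (t • a) - t • a = t • (φ a - a) := by rw [map_smul, smul_sub]
        rw [h]; exact I.smul_mem t haI } with hPdef
  set N : Submodule ℝ V :=
    { carrier := {x | x ∈ G ∧ φ x + x ∈ I}
      add_mem' := by
        rintro a b ⟨haG, haI⟩ ⟨hbG, hbI⟩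
        refine ⟨G.add_mem haG hbG, ?_⟩
        have h : φ (a + b) + (a + b) = (φ a + a) + (φ b + b) := by rw [map_add]; abel
        rw [h]; exact I.add_mem haI hbI
      zero_mem' := ⟨G.zero_mem, by simp⟩
      smul_mem' := by
        rintro t a ⟨haG, haI⟩
        refine ⟨G.smul_mem t haG, ?_⟩
        have h : φ (t • a) + t • a = t • (φ a + a) := by rw [map_smul, smul_add]
        rw [h]; exact I.smul_mem t haI } with hNdef
  have hPmem : ∀ x : V, x ∈ P ↔ x ∈ G ∧ φ x - x ∈ I := fun x => Iff.rfl
  have hNmem : ∀ x : V, x ∈ N ↔ x ∈ G ∧ φ x + x ∈ I := fun x => Iff.rfl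
  have hPG : P ≤ G := fun x hx => ((hPmem x).mp hx).1
  have hNG : N ≤ G := fun x hx => ((hNmem x).mp hx).1
  have hPNbot : P ⊓ N = ⊥ := by
    rw [eq_bot_iff]
    intro x hx
    obtain ⟨hxP, hxN⟩ := Submodule.mem_inf.mp hx
    obtain ⟨hxG, hxI1⟩ := (hPmem x).mp hxP
    obtain ⟨_, hxI2⟩ := (hNmem x).mp hxN
    have hxx : x + x ∈ I := by
      have h : x + x = (φ x + x) - (φ x - x) := by abel
      rw [h]; exact I.sub_mem hxI2 hxI1
    have hxI : x ∈ I := by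
      have h : x = (2⁻¹ : ℝ) • (x + x) := by
        rw [← two_smul ℝ x, ← mul_smul]; norm_num
      rw [h]; exact I.smul_mem _ hxx
    simpa using hIG x hxI hxG
  have hPNG : P ⊔ N = G := by
    refine le_antisymm (sup_le hPG hNG) ?_
    intro x hx
    have hφx : φ x ∈ I ⊔ G := by rw [← hWIG]; exact hφW x (hGW hx)
    obtain ⟨i, hi, gx, hgx, hdec⟩ := Submodule.mem_sup.mp hφx
    have hφgx : φ gx = x - φ i := by
      have h1 : φ i + φ gx = x := by rw [← map_add, hdec, hinv]
      exact eq_sub_of_add_eq' h1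
    refine Submodule.mem_sup.mpr
      ⟨(2⁻¹ : ℝ) • (x + gx), ?_, (2⁻¹ : ℝ) • (x - gx), ?_, ?_⟩
    · refine (hPmem _).mpr ⟨G.smul_mem _ (G.add_mem hx hgx), ?_⟩
      have h : φ ((2⁻¹ : ℝ) • (x + gx)) - (2⁻¹ : ℝ) • (x + gx) = (2⁻¹ : ℝ) • (i - φ i) := by
        rw [map_smul, map_add, hφgx, ← hdec]
        module
      rw [h]; exact I.smul_mem _ (I.sub_mem hi (hφI i hi))
    · refine (hNmem _).mpr ⟨G.smul_mem _ (G.sub_mem hx hgx), ?_⟩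
      have h : φ ((2⁻¹ : ℝ) • (x - gx)) + (2⁻¹ : ℝ) • (x - gx) = (2⁻¹ : ℝ) • (i + φ i) := by
        rw [map_smul, map_sub, hφgx, ← hdec]
        module
      rw [h]; exact I.smul_mem _ (I.add_mem hi (hφI i hi))
    · module
  have hPiso : ∀ x ∈ P, ∀ y ∈ P, g x y = 0 := by
    intro x hxP y hyP
    obtain ⟨hxG, hxI⟩ := (hPmem x).mp hxP
    obtain ⟨hyG, hyI⟩ := (hPmem y).mp hyP
    have h1 : g (φ x) (φ y) = - g x y := hcompat x y
    have hx' : φ x = x + (φ x - x) := by abel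
    have hy' : φ y = y + (φ y - y) := by abel
    rw [hx', hy'] at h1
    have e1 : g x (φ y - y) = 0 := by rw [hsymm]; exact hIrad _ hyI x (hGW hxG)
    have e2 : g (φ x - x) y = 0 := hIrad _ hxI y (hGW hyG)
    have e3 : g (φ x - x) (φ y - y) = 0 := hIrad _ hxI _ (hIW hyI)
    simp only [map_add, LinearMap.add_apply, e1, e2, e3, add_zero, zero_add] at h1
    linarith
  have hNiso : ∀ x ∈ N, ∀ y ∈ N, g x y = 0 := by
    intro x hxN y hyN
    obtain ⟨hxG, hxI⟩ := (hNmem x).mp hxN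
    obtain ⟨hyG, hyI⟩ := (hNmem y).mp hyN
    have h1 : g (φ x) (φ y) = - g x y := hcompat x y
    have hx' : φ x = (φ x + x) - x := by abel
    have hy' : φ y = (φ y + y) - y := by abel
    rw [hx', hy'] at h1
    have e1 : g x (φ y + y) = 0 := by rw [hsymm]; exact hIrad _ hyI x (hGW hxG)
    have e2 : g (φ x + x) y = 0 := hIrad _ hxI y (hGW hyG)
    have e3 : g (φ x + x) (φ y + y) = 0 := hIrad _ hxI _ (hIW hyI)
    simp only [map_sub, LinearMap.sub_apply, e1, e2, e3, sub_zero, zero_sub] at h1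
    linarith
  have key : ∀ A Bm : Submodule ℝ V, A ⊔ Bm = G → (∀ x ∈ A, ∀ y ∈ A, g x y = 0) →
      Module.finrank ℝ A ≤ Module.finrank ℝ Bm := by
    intro A Bm hsup hiso
    have hinj : Function.Injective (g.domRestrict₁₂ A Bm) := by
      rw [injective_iff_map_eq_zero]
      intro a ha
      refine Subtype.ext (hGreg _ (by rw [← hsup]; exact Submodule.mem_sup_left a.2) fun y hy => ?_)
      rw [← hsup] at hy
      obtain ⟨u, hu, v, hv, rfl⟩ := Submodule.mem_sup.mp hy
      have h1 : g a u = 0 := hiso _ a.2 u hu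
      have h2 : g a v = 0 := by
        have := LinearMap.congr_fun ha ⟨v, hv⟩
        simpa [LinearMap.domRestrict₁₂_apply] using this
      rw [map_add, h1, h2, add_zero]
    calc Module.finrank ℝ A ≤ Module.finrank ℝ (Module.Dual ℝ Bm) :=
          LinearMap.finrank_le_finrank_of_injective hinj
      _ = Module.finrank ℝ Bm := Subspace.dual_finrank_eq
  set l := Module.finrank ℝ P with hl
  have hNl : Module.finrank ℝ N = l :=
    le_antisymm (key N P (by rw [sup_comm, hPNG]) hNiso) (key P N hPNG hPiso)
  have hGrk : Module.finrank ℝ G = 2 * l := by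
    have h := Submodule.finrank_sup_add_finrank_inf_eq P N
    rw [hPNG, hPNbot, finrank_bot, hNl] at h
    omega
  refine ⟨l, hGrk, by rw [hrk, hGrk]; ring, I ⊔ P, ?_, ?_, ?_⟩
  · exact sup_le (hIW.trans hWH) (((hPG.trans hGW)).trans hWH)
  · intro x hx y hy
    obtain ⟨u, hu, v, hv, rfl⟩ := Submodule.mem_sup.mp hx
    obtain ⟨u', hu', v', hv', rfl⟩ := Submodule.mem_sup.mp hy
    have e1 : g u u' = 0 := hIrad _ hu _ (hIW hu')
    have e2 : g u v' = 0 := hIrad _ hu _ (hGW (hPG hv'))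
    have e3 : g v u' = 0 := by rw [hsymm]; exact hIrad _ hu' _ (hGW (hPG hv))
    have e4 : g v v' = 0 := hPiso v hv v' hv'
    simp only [map_add, LinearMap.add_apply, e1, e2, e3, e4, add_zero]
  · have h := Submodule.finrank_sup_add_finrank_inf_eq I P
    have hbot : I ⊓ P = ⊥ := by
      rw [eq_bot_iff]
      intro x hx
      obtain ⟨hxI, hxP⟩ := Submodule.mem_inf.mp hx
      simpa using hIG x hxI (hPG hxP)
    rw [hbot, finrank_bot] at h
    omega



/-- Any regular hull `H` of a degenerate subspace `W` with radical `I` is isometric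
to the orthogonal direct sum `(I ⊕ I*) ⊕ G`, where `G` is a maximal nondegenerate
subspace of `W` and `I ⊕ I*` carries its canonical neutral hyperbolic pairing
`⟨(x,α),(y,β)⟩ = α(y) + β(x)`.  In particular, when `W` is `φ`-invariant the hull
has neutral signature `(k+l, k+l)` with `k = dim I` and `G` of signature `(l,l)`,
expressed by the existence of a totally isotropic subspace of `H` of half its
dimension, of dimension `k + l`. -/
theorem stmt4 {V : Type*} [AddCommGroup V] [Module ℝ V] [FiniteDimensional ℝ V]
    (g : V →ₗ[ℝ] V →ₗ[ℝ] ℝ) (hsymm : ∀ x y, g x y = g y x)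
    (hnd : ∀ x, (∀ y, g x y = 0) → x = 0)
    (φ : V →ₗ[ℝ] V) (hinv : ∀ x, φ (φ x) = x)
    (hcompat : ∀ x y, g (φ x) (φ y) = - g x y)
    (W H I G : Submodule ℝ V)
    -- `I` is the radical (singularity) of `W`, nontrivial since `W` is degenerate
    (hIdef : ∀ v : V, v ∈ I ↔ v ∈ W ∧ ∀ w ∈ W, g v w = 0)
    (hIne : I ≠ ⊥)
    -- `H` is a regular hull of `W` : minimal nondegenerate subspace containing `W`
    (hWH : W ≤ H)
    (hHreg : ∀ x ∈ H, (∀ y ∈ H, g x y = 0) → x = 0)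
    (hHmin : ∀ H' : Submodule ℝ V, W ≤ H' → H' ≤ H →
      (∀ x ∈ H', (∀ y ∈ H', g x y = 0) → x = 0) → H' = H)
    -- `G` is a maximal nondegenerate subspace of `W`
    (hGW : G ≤ W)
    (hGreg : ∀ x ∈ G, (∀ y ∈ G, g x y = 0) → x = 0)
    (hGmax : ∀ G' : Submodule ℝ V, G ≤ G' → G' ≤ W →
      (∀ x ∈ G', (∀ y ∈ G', g x y = 0) → x = 0) → G' = G) :
    (∃ e : H ≃ₗ[ℝ] (I × Module.Dual ℝ I) × G,
      ∀ x y : H, g (x : V) (y : V) =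
        (e x).1.2 (e y).1.1 + (e y).1.2 (e x).1.1 + g ((e x).2 : V) ((e y).2 : V)) ∧
    ((∀ w ∈ W, φ w ∈ W) →
      ∃ l : ℕ, Module.finrank ℝ G = 2 * l ∧
        Module.finrank ℝ H = 2 * (Module.finrank ℝ I + l) ∧
        ∃ L : Submodule ℝ V, L ≤ H ∧ (∀ x ∈ L, ∀ y ∈ L, g x y = 0) ∧
          Module.finrank ℝ L = Module.finrank ℝ I + l) := by
  have hWIG : W = I ⊔ G := aux_decomp g hsymm W I G hIdef hGW hGreg hGmax
  obtain ⟨h1, hrk⟩ := aux_main1 g hsymm W H I G hIdef hWH hHreg hHmin hGW hGreg hWIG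
  exact ⟨h1, fun hφW =>
    aux_main2 g hsymm φ hinv hcompat W H I G hIdef hWH hGW hGreg hWIG hrk hφW⟩
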